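/- Suppose (a_1, …, a_m) and (b_1, …, b_n) are tuples of positive integers such that for every positive integer N, ∑_{k=1}^{m} gcd(a_k, N) = ∑_{k=1}^{n} gcd(b_k, N). Then the multiset {a_1, …, a_m} equals the multiset {b_1, …, b_n}. -/

import Mathlib

open Finset Multiset

private lemma gcd_eq_sum_totient (a N : ℕ) (hN : 0 < N) :
    Nat.gcd a N = ∑ e ∈ N.divisors, if e ∣ a then e.totient else 0 := by
  have h1 : (Nat.gcd a N).divisors = N.divisors.filter (· ∣ a) := by
    ext e
    simp only [Nat.mem_divisors, Finset.mem_filter, Nat.dvd_gcd_iff]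
    constructor
    · rintro ⟨⟨h1, h2⟩, _⟩; exact ⟨⟨h2, hN.ne'⟩, h1⟩
    · rintro ⟨⟨h2, h3⟩, h1⟩
      refine ⟨⟨h1, h2⟩, fun hc => h3 ?_⟩
      exact Nat.eq_zero_of_gcd_eq_zero_right hc
  calc Nat.gcd a N = ∑ e ∈ (Nat.gcd a N).divisors, e.totient := (Nat.sum_totient _).symm
    _ = ∑ e ∈ N.divisors.filter (· ∣ a), e.totient := by rw [h1]
    _ = ∑ e ∈ N.divisors, if e ∣ a then e.totient else 0 := Finset.sum_filter _ _

private lemma sum_gcd_eq {ι : Type*} [Fintype ι] (f : ι → ℕ) (N : ℕ) (hN : 0 < N) :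
    ∑ k, Nat.gcd (f k) N
      = ∑ e ∈ N.divisors, e.totient * (Finset.univ.filter (fun k => e ∣ f k)).card := by
  calc ∑ k, Nat.gcd (f k) N
      = ∑ k, ∑ e ∈ N.divisors, if e ∣ f k then e.totient else 0 :=
        Finset.sum_congr rfl fun k _ => gcd_eq_sum_totient _ _ hN
    _ = ∑ e ∈ N.divisors, ∑ k, if e ∣ f k then e.totient else 0 := Finset.sum_comm
    _ = _ := by
        refine Finset.sum_congr rfl fun e _ => ?_
        rw [← Finset.sum_filter, Finset.sum_const, smul_eq_mul, mul_comm]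

private lemma multiset_eq_of_filter_dvd_card (k : ℕ) : ∀ (s t : Multiset ℕ),
    Multiset.card s = k → (∀ x ∈ s, 0 < x) → (∀ x ∈ t, 0 < x) →
    (∀ d, 0 < d → (s.filter (d ∣ ·)).card = (t.filter (d ∣ ·)).card) → s = t := by
  induction k with
  | zero =>
    intro s t hc hs ht hf
    have hs0 : s = 0 := Multiset.card_eq_zero.mp hc
    subst hs0
    have h1 := hf 1 one_pos
    simp only [Multiset.filter_zero, Multiset.card_zero] at h1
    rw [Multiset.filter_eq_self.mpr (fun x (_ : x ∈ t) => one_dvd x)] at h1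
    exact (Multiset.card_eq_zero.mp h1.symm).symm
  | succ k ih =>
    intro s t hc hs ht hf
    have hsne : s ≠ 0 := by rintro rfl; simp at hc
    have hne : (s + t).toFinset.Nonempty := by
      obtain ⟨x, hx⟩ := Multiset.exists_mem_of_ne_zero hsne
      exact ⟨x, Multiset.mem_toFinset.mpr (Multiset.mem_add.mpr (Or.inl hx))⟩
    set M := (s + t).toFinset.max' hne with hM
    have hMmem : M ∈ s + t := Multiset.mem_toFinset.mp ((s + t).toFinset.max'_mem hne)
    have hle : ∀ y ∈ s + t, y ≤ M := fun y hy => Finset.le_max' _ y (Multiset.mem_toFinset.mpr hy)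
    have hMpos : 0 < M := by
      rcases Multiset.mem_add.mp hMmem with h | h
      exacts [hs _ h, ht _ h]
    -- in both s and t, divisibility by M is the same as being equal to M
    have hfilter : ∀ (u : Multiset ℕ), (∀ x ∈ u, 0 < x) → (∀ y ∈ u, y ≤ M) →
        u.filter (M ∣ ·) = u.filter (· = M) := by
      intro u hu hleu
      apply Multiset.filter_congr
      intro x hx
      constructor
      · intro hd; exact Nat.le_antisymm (hleu x hx) (Nat.le_of_dvd (hu x hx) hd)
      · rintro rfl; exact dvd_refl _
    have hcard_eq_count : ∀ (u : Multiset ℕ), (u.filter (· = M)).card = u.count M := by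
      intro u; rw [Multiset.filter_eq', Multiset.card_replicate]
    have hcount : s.count M = t.count M := by
      rw [← hcard_eq_count, ← hcard_eq_count,
        ← hfilter s hs (fun y hy => hle y (Multiset.mem_add.mpr (Or.inl hy))),
        ← hfilter t ht (fun y hy => hle y (Multiset.mem_add.mpr (Or.inr hy)))]
      exact hf M hMpos
    have hMs : M ∈ s := by
      rcases Multiset.mem_add.mp hMmem with h | h
      · exact h
      · rw [← Multiset.count_pos] at h ⊢; omega
    have hMt : M ∈ t := by
      rw [← Multiset.count_pos] at hMs ⊢; omega
    -- relate filters on u and on u.erase M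
    have herase : ∀ (u : Multiset ℕ) (d : ℕ), M ∈ u →
        (u.filter (d ∣ ·)).card
          = ((u.erase M).filter (d ∣ ·)).card + (if d ∣ M then 1 else 0) := by
      intro u d hu
      conv_lhs => rw [← Multiset.cons_erase hu]
      rw [Multiset.filter_cons, Multiset.card_add]
      split <;> simp [add_comm]
    have hc' : Multiset.card (s.erase M) = k := by
      rw [Multiset.card_erase_of_mem hMs, hc]; rfl
    have heq := ih (s.erase M) (t.erase M) hc'
      (fun x hx => hs x (Multiset.mem_of_mem_erase hx))
      (fun x hx => ht x (Multiset.mem_of_mem_erase hx))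
      (by
        intro d hd
        have h1 := herase s d hMs
        have h2 := herase t d hMt
        have h3 := hf d hd
        omega)
    calc s = M ::ₘ s.erase M := (Multiset.cons_erase hMs).symm
      _ = M ::ₘ t.erase M := by rw [heq]
      _ = t := Multiset.cons_erase hMt

theorem gcd_sum_multiset_eq
    (m n : ℕ) (a : Fin m → ℕ) (b : Fin n → ℕ)
    (ha : ∀ i, 0 < a i) (hb : ∀ i, 0 < b i)
    (h : ∀ N : ℕ, 0 < N → ∑ k, Nat.gcd (a k) N = ∑ k, Nat.gcd (b k) N) :
    Multiset.map a Finset.univ.val = Multiset.map b Finset.univ.val := by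
  set cA : ℕ → ℕ := fun e => (Finset.univ.filter (fun k => e ∣ a k)).card with hcA
  set cB : ℕ → ℕ := fun e => (Finset.univ.filter (fun k => e ∣ b k)).card with hcB
  have hsum : ∀ N, 0 < N →
      ∑ e ∈ N.divisors, e.totient * cA e = ∑ e ∈ N.divisors, e.totient * cB e := by
    intro N hN
    rw [← sum_gcd_eq a N hN, ← sum_gcd_eq b N hN]
    exact h N hN
  have key : ∀ d, 0 < d → cA d = cB d := by
    intro d
    induction d using Nat.strong_induction_on with
    | _ d ih =>
      intro hd
      have h1 := hsum d hd
      rw [← Nat.insert_self_properDivisors hd.ne', Finset.sum_insert Nat.self_notMem_properDivisors,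
        Finset.sum_insert Nat.self_notMem_properDivisors] at h1
      have hprop : ∑ e ∈ d.properDivisors, e.totient * cA e
          = ∑ e ∈ d.properDivisors, e.totient * cB e := by
        refine Finset.sum_congr rfl fun e he => ?_
        have he' := Nat.mem_properDivisors.mp he
        rw [ih e he'.2 (Nat.pos_of_mem_properDivisors (Nat.mem_properDivisors.mpr he'))]
      have h2 : d.totient * cA d = d.totient * cB d := by omega
      exact Nat.eq_of_mul_eq_mul_left (Nat.totient_pos.mpr hd) h2
  refine multiset_eq_of_filter_dvd_card (Multiset.card (Multiset.map a Finset.univ.val)) _ _ rfl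
    (by intro x hx; obtain ⟨i, _, rfl⟩ := Multiset.mem_map.mp hx; exact ha i)
    (by intro x hx; obtain ⟨i, _, rfl⟩ := Multiset.mem_map.mp hx; exact hb i)
    (by
      intro d hd
      have := key d hd
      rw [hcA, hcB] at this
      rw [Multiset.filter_map, Multiset.filter_map, Multiset.card_map, Multiset.card_map]
      simp only [Finset.card_def, Finset.filter_val] at this
      convert this using 2 <;> exact Multiset.filter_congr (fun _ _ => Iff.rfl))
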